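/- Let E = (E,+,',0,1) be a monotonous effect algebra with induced order ≤. Define a partial operation ⊙ by x⊙y := (x'+y')' (defined if and only if x' ≤ y) and a map → : E² → 2^E by x→y := x' + L(x,y) = {x'+c : c ∈ L(x,y)}. Then (E,≤,⊙,→,',0,1) is a divisible commutative unsharp residuated poset. -/

import Mathlib

namespace Paper

variable {E : Type*}

/-- The lower cone `L(S)` of a subset w.r.t. an order relation. -/
def lcone (le : E → E → Prop) (S : Set E) : Set E := {x | ∀ y ∈ S, le x y}

/-- The upper cone `U(S)` of a subset w.r.t. an order relation. -/
def ucone (le : E → E → Prop) (S : Set E) : Set E := {x | ∀ y ∈ S, le y x}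

/-- `S ≤ T` for subsets: every element of `S` is below every element of `T`. -/
def setLE (le : E → E → Prop) (S T : Set E) : Prop := ∀ x ∈ S, ∀ y ∈ T, le x y

/-- Effect algebra axioms (E1)-(E4); the partial operation `+` is encoded via `Option`
(`add x y = some z` means `x + y` is defined with value `z`). -/
structure IsEffectAlgebra (add : E → E → Option E) (compl : E → E)
    (zero one : E) : Prop where
  /-- (E1) -/
  comm : ∀ x y, add x y = add y x
  /-- (E2) -/
  assoc : ∀ x y z, (add x y).bind (fun u => add u z) = (add y z).bind (fun v => add x v)
  /-- (E3): `x'` is the unique `u` with `x + u = 1`. -/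
  compl_iff : ∀ x u, add x u = some one ↔ u = compl x
  /-- (E4) -/
  one_add : ∀ x y, add one x = some y → x = zero

/-- The induced order: `x ≤ y` iff there is `z` with `x + z = y`. -/
def eaLe (add : E → E → Option E) (x y : E) : Prop := ∃ z, add x z = some y

/-- `x + A := {x + a : a ∈ A}`. -/
def addLSet (add : E → E → Option E) (x : E) (S : Set E) : Set E :=
  {z | ∃ a ∈ S, add x a = some z}

/-- `A + x := {a + x : a ∈ A}`. -/
def addRSet (add : E → E → Option E) (S : Set E) (x : E) : Set E :=
  {z | ∃ a ∈ S, add a x = some z}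

/-- A monotonous effect algebra: for every `x` and nonempty `A`, `B`, if `A ∪ B ≤ x'`
and `L(A) ≤ U(B)`, then `L(x + A) ≤ U(x + B)`. -/
def Monotonous (add : E → E → Option E) (compl : E → E) : Prop :=
  ∀ (x : E) (A B : Set E), A.Nonempty → B.Nonempty →
    (∀ a ∈ A ∪ B, eaLe add a (compl x)) →
    setLE (eaLe add) (lcone (eaLe add) A) (ucone (eaLe add) B) →
    setLE (eaLe add) (lcone (eaLe add) (addLSet add x A)) (ucone (eaLe add) (addLSet add x B))

/-- The multiplication `x ⊙ y := (x' + y')'` derived from an effect algebra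
(defined iff `x' + y'` is, i.e. iff `x' ≤ y`). -/
def eaOdot (add : E → E → Option E) (compl : E → E) (x y : E) : Option E :=
  (add (compl x) (compl y)).map compl

/-- The implication `x → y := x' + L(x,y)` derived from an effect algebra. -/
def eaImp (add : E → E → Option E) (compl : E → E) (x y : E) : Set E :=
  addLSet add (compl x) (lcone (eaLe add) {x, y})

/-- `S ⊙ y := {s ⊙ y : s ∈ S}`. -/
def odotLSet (odot : E → E → Option E) (S : Set E) (y : E) : Set E :=
  {w | ∃ s ∈ S, odot s y = some w}

/-- `y ⊙ S := {y ⊙ s : s ∈ S}`. -/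
def odotRSet (odot : E → E → Option E) (y : E) (S : Set E) : Set E :=
  {w | ∃ s ∈ S, odot y s = some w}

/-- Commutative unsharp residuated poset, axioms (C1)-(C4); `⊙` is a partial
operation encoded via `Option` and `→` maps pairs to subsets. -/
structure IsCURP (le : E → E → Prop) (odot : E → E → Option E) (imp : E → E → Set E)
    (compl : E → E) (zero one : E) : Prop where
  /-- (C1): bounded poset … -/
  le_refl : ∀ x, le x x
  le_antisymm : ∀ x y, le x y → le y x → x = y
  le_trans : ∀ x y z, le x y → le y z → le x z
  zero_le : ∀ x, le zero x
  le_one : ∀ x, le x one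
  /-- (C1): … with an antitone involution. -/
  compl_compl : ∀ x, compl (compl x) = x
  compl_antitone : ∀ x y, le x y → le (compl y) (compl x)
  /-- (C2): `x ⊙ y` is defined iff `x' ≤ y`. -/
  odot_defined : ∀ x y, (odot x y).isSome ↔ le (compl x) y
  /-- (C2): partial commutative monoid. -/
  odot_comm : ∀ x y, odot x y = odot y x
  odot_assoc : ∀ x y z, (odot x y).bind (fun u => odot u z) = (odot y z).bind (fun v => odot x v)
  odot_one : ∀ x, odot x one = some x
  one_odot : ∀ x, odot one x = some x
  /-- (C2): `z' ≤ x ≤ y` implies `x ⊙ z ≤ y ⊙ z`. -/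
  odot_mono : ∀ x y z a b, le (compl z) x → le x y →
    odot x z = some a → odot y z = some b → le a b
  /-- (C3): unsharp adjointness. -/
  adjoint : ∀ x y z,
    setLE le (lcone le (odotLSet odot (ucone le {x, compl y}) y))
      (ucone le (lcone le {y, z})) ↔
    setLE le (lcone le (ucone le {x, compl y})) (ucone le (imp y z))
  /-- (C4) -/
  imp_zero : ∀ x, imp x zero = {compl x}

/-- Divisibility: `x ≤ y` implies `y ⊙ (y → x) = L(x)`. -/
def CURPDivisible (le : E → E → Prop) (odot : E → E → Option E)
    (imp : E → E → Set E) : Prop :=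
  ∀ x y, le x y → odotRSet odot y (imp y x) = lcone le {x}

/-- Pseudoeffect algebra axioms (P1)-(P4); `x̄ = lc x`, `x̃ = rc x`. -/
structure IsPEA (add : E → E → Option E) (lc rc : E → E) (zero one : E) : Prop where
  /-- (P1): if `x + y` is defined then `u + x = x + y` for some `u` … -/
  exists_left : ∀ x y z, add x y = some z → ∃ u, add u x = some z
  /-- (P1): … and `y + w = x + y` for some `w`. -/
  exists_right : ∀ x y z, add x y = some z → ∃ w, add y w = some z
  /-- (P2) -/
  assoc : ∀ x y z, (add x y).bind (fun u => add u z) = (add y z).bind (fun v => add x v)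
  /-- (P3): `x̄` is the unique `u` with `u + x = 1`. -/
  lc_iff : ∀ x u, add u x = some one ↔ u = lc x
  /-- (P3): `x̃` is the unique `w` with `x + w = 1`. -/
  rc_iff : ∀ x w, add x w = some one ↔ w = rc x
  /-- (P4) -/
  one_add : ∀ x y, add one x = some y → x = zero
  add_one : ∀ x y, add x one = some y → x = zero

/-- A pseudoeffect algebra is good if `(x̄ + ȳ)˜ = (x̃ + ỹ)‾` whenever `x̃ ≤ y`. -/
def Good (add : E → E → Option E) (lc rc : E → E) : Prop :=
  ∀ x y, eaLe add (rc x) y →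
    (add (lc x) (lc y)).map rc = (add (rc x) (rc y)).map lc

/-- A monotonous pseudoeffect algebra. -/
def PEAMonotonous (add : E → E → Option E) (lc rc : E → E) : Prop :=
  (∀ (x : E) (A B : Set E), A.Nonempty → B.Nonempty →
    (∀ a ∈ A ∪ B, eaLe add a (lc x)) →
    setLE (eaLe add) (lcone (eaLe add) A) (ucone (eaLe add) B) →
    setLE (eaLe add) (lcone (eaLe add) (addRSet add A x))
      (ucone (eaLe add) (addRSet add B x))) ∧
  (∀ (x : E) (A B : Set E), A.Nonempty → B.Nonempty →
    (∀ a ∈ A ∪ B, eaLe add a (rc x)) →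
    setLE (eaLe add) (lcone (eaLe add) A) (ucone (eaLe add) B) →
    setLE (eaLe add) (lcone (eaLe add) (addLSet add x A))
      (ucone (eaLe add) (addLSet add x B)))

/-- The multiplication `x ⊙ y := (x̄ + ȳ)˜` derived from a pseudoeffect algebra. -/
def peaOdot (add : E → E → Option E) (lc rc : E → E) (x y : E) : Option E :=
  (add (lc x) (lc y)).map rc

/-- The implication `x → y := x̄ + L(x,y)` derived from a pseudoeffect algebra. -/
def peaImp (add : E → E → Option E) (lc : E → E) (x y : E) : Set E :=
  {z | ∃ c ∈ lcone (eaLe add) {x, y}, add (lc x) c = some z}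

/-- The implication `x ⇝ y := L(x,y) + x̃` derived from a pseudoeffect algebra. -/
def peaImpW (add : E → E → Option E) (rc : E → E) (x y : E) : Set E :=
  {z | ∃ c ∈ lcone (eaLe add) {x, y}, add c (rc x) = some z}

/-- Unsharp residuated poset, axioms (R1)-(R7); `x̄ = lc x`, `x̃ = rc x`. -/
structure IsURP (le : E → E → Prop) (odot : E → E → Option E)
    (imp impW : E → E → Set E) (lc rc : E → E) (zero one : E) : Prop where
  /-- (R1): bounded poset. -/
  le_refl : ∀ x, le x x
  le_antisymm : ∀ x y, le x y → le y x → x = y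
  le_trans : ∀ x y z, le x y → le y z → le x z
  zero_le : ∀ x, le zero x
  le_one : ∀ x, le x one
  /-- (R2) -/
  rc_lc : ∀ x, rc (lc x) = x
  lc_rc : ∀ x, lc (rc x) = x
  lc_antitone : ∀ x y, le x y → le (lc y) (lc x)
  rc_antitone : ∀ x y, le x y → le (rc y) (rc x)
  /-- (R3): `x ⊙ y` is defined iff `x̃ ≤ y`. -/
  odot_defined : ∀ x y, (odot x y).isSome ↔ le (rc x) y
  /-- (R3): partial monoid. -/
  odot_assoc : ∀ x y z, (odot x y).bind (fun u => odot u z) = (odot y z).bind (fun v => odot x v)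
  odot_one : ∀ x, odot x one = some x
  one_odot : ∀ x, odot one x = some x
  /-- (R3): `z̄ ≤ x ≤ y` implies `x ⊙ z ≤ y ⊙ z`. -/
  odot_rmono : ∀ x y z a b, le (lc z) x → le x y →
    odot x z = some a → odot y z = some b → le a b
  /-- (R3): `z̃ ≤ x ≤ y` implies `z ⊙ x ≤ z ⊙ y`. -/
  odot_lmono : ∀ x y z a b, le (rc z) x → le x y →
    odot z x = some a → odot z y = some b → le a b
  /-- (R4) -/
  adjoint_r : ∀ x y z,
    setLE le (lcone le (odotLSet odot (ucone le {x, lc y}) y))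
      (ucone le (lcone le {y, z})) ↔
    setLE le (lcone le (ucone le {x, lc y})) (ucone le (imp y z))
  /-- (R5) -/
  adjoint_l : ∀ x y z,
    setLE le (lcone le (odotRSet odot y (ucone le {x, rc y})))
      (ucone le (lcone le {y, z})) ↔
    setLE le (lcone le (ucone le {x, rc y})) (ucone le (impW y z))
  /-- (R6) -/
  imp_zero : ∀ x, imp x zero = {lc x}
  impW_zero : ∀ x, impW x zero = {rc x}
  /-- (R7) -/
  compat : ∀ x y, (odot (lc x) (lc y)).map rc = (odot (rc x) (rc y)).map lc

section EA

variable {add : E → E → Option E} {compl : E → E} {zero one : E}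

namespace EA

variable (h : IsEffectAlgebra add compl zero one)
include h

lemma add_self (x : E) : add x (compl x) = some one :=
  (h.compl_iff x (compl x)).mpr rfl

lemma cc (x : E) : compl (compl x) = x :=
  ((h.compl_iff (compl x) x).mp (by rw [h.comm]; exact add_self h x)).symm

lemma sub {a b d : E} (hab : add a b = some d) :
    add b (compl d) = some (compl a) := by
  have ha := h.assoc a b (compl d)
  rw [hab] at ha
  simp only [Option.bind_some] at ha
  rw [add_self h d] at ha
  cases hbd : add b (compl d) with
  | none => rw [hbd] at ha; simp at ha
  | some w =>
    rw [hbd] at ha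
    simp only [Option.bind_some] at ha
    rw [(h.compl_iff a w).mp ha.symm]

lemma cancel {a b c d : E} (hab : add a b = some d) (hac : add a c = some d) :
    b = c := by
  have h1 := sub h (sub h hab)
  have h2 := sub h (sub h hac)
  rw [cc h] at h1 h2
  rw [h1] at h2
  have := Option.some_injective _ h2
  rw [← cc h b, ← cc h c, this]

lemma compl_one : compl one = zero :=
  h.one_add _ _ (add_self h one)

lemma compl_zero : compl zero = one := by
  rw [← compl_one h, cc h]

lemma add_one_zero : add one zero = some one :=
  (h.compl_iff one zero).mpr (compl_one h).symm

lemma add_zero (x : E) : add x zero = some x := by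
  have ha := h.assoc (compl x) x zero
  rw [h.comm (compl x) x, add_self h x] at ha
  simp only [Option.bind_some] at ha
  rw [add_one_zero h] at ha
  cases hx0 : add x zero with
  | none => rw [hx0] at ha; simp at ha
  | some w =>
    rw [hx0] at ha
    simp only [Option.bind_some] at ha
    have hw : w = compl (compl x) := (h.compl_iff (compl x) w).mp ha.symm
    rw [cc h] at hw
    rw [hw]

lemma zero_add (x : E) : add zero x = some x := by
  rw [h.comm]; exact add_zero h x

lemma le_refl (x : E) : eaLe add x x := ⟨zero, add_zero h x⟩

lemma zero_le (x : E) : eaLe add zero x := ⟨x, zero_add h x⟩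

lemma le_one (x : E) : eaLe add x one := ⟨compl x, add_self h x⟩

lemma le_trans {x y z : E} (hxy : eaLe add x y) (hyz : eaLe add y z) :
    eaLe add x z := by
  obtain ⟨a, ha⟩ := hxy
  obtain ⟨b, hb⟩ := hyz
  have hs := h.assoc x a b
  rw [ha] at hs
  simp only [Option.bind_some] at hs
  rw [hb] at hs
  cases hab : add a b with
  | none => rw [hab] at hs; simp at hs
  | some c =>
    rw [hab] at hs
    simp only [Option.bind_some] at hs
    exact ⟨c, hs.symm⟩

lemma eq_zero_of_add_zero {a b : E} (hab : add a b = some zero) :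
    a = zero ∧ b = zero := by
  have hs := h.assoc a b one
  rw [hab] at hs
  simp only [Option.bind_some] at hs
  rw [zero_add h one] at hs
  cases hb1 : add b one with
  | none => rw [hb1] at hs; simp at hs
  | some w =>
    rw [hb1] at hs
    simp only [Option.bind_some] at hs
    have hb : b = zero := h.one_add b w (by rw [h.comm]; exact hb1)
    rw [hb, add_zero h a] at hab
    exact ⟨Option.some_injective _ hab, hb⟩

lemma le_antisymm {x y : E} (hxy : eaLe add x y) (hyx : eaLe add y x) :
    x = y := by
  obtain ⟨a, ha⟩ := hxy
  obtain ⟨b, hb⟩ := hyx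
  have hs := h.assoc x a b
  rw [ha] at hs
  simp only [Option.bind_some] at hs
  rw [hb] at hs
  cases hab : add a b with
  | none => rw [hab] at hs; simp at hs
  | some c =>
    rw [hab] at hs
    simp only [Option.bind_some] at hs
    have hc : c = zero := cancel h hs.symm (add_zero h x)
    rw [hc] at hab
    have ha0 := (eq_zero_of_add_zero h hab).1
    rw [ha0, add_zero h x] at ha
    exact Option.some_injective _ ha

lemma compl_antitone {x y : E} (hxy : eaLe add x y) :
    eaLe add (compl y) (compl x) := by
  obtain ⟨z, hz⟩ := hxy
  have := sub h hz
  exact ⟨z, by rw [h.comm]; exact this⟩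

lemma le_of_compl_le {x y : E} (hxy : eaLe add (compl y) (compl x)) :
    eaLe add x y := by
  have := compl_antitone h hxy
  rwa [cc h, cc h] at this

lemma defined_of_le {x y : E} (hxy : eaLe add x (compl y)) :
    ∃ z, add x y = some z := by
  obtain ⟨w, hw⟩ := hxy
  have hwy : add w y = some (compl x) := by
    have hs := h.assoc x w y
    rw [hw] at hs
    simp only [Option.bind_some] at hs
    rw [h.comm (compl y) y] at hs
    rw [add_self h y] at hs
    cases hwy' : add w y with
    | none => rw [hwy'] at hs; simp at hs
    | some v =>
      rw [hwy'] at hs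
      simp only [Option.bind_some] at hs
      rw [(h.compl_iff x v).mp hs.symm]
  have hs := h.assoc x y w
  rw [h.comm y w, hwy] at hs
  simp only [Option.bind_some] at hs
  rw [add_self h x] at hs
  cases hxy' : add x y with
  | none => rw [hxy'] at hs; simp at hs
  | some z => exact ⟨z, rfl⟩

lemma le_compl_of_defined {x y z : E} (hxy : add x y = some z) :
    eaLe add x (compl y) := by
  have h1 := sub h hxy
  have h2 := sub h h1
  rw [cc h] at h2
  exact ⟨compl z, by rw [h.comm]; exact h2⟩

lemma isSome_iff {x y : E} : (add x y).isSome ↔ eaLe add x (compl y) := by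
  constructor
  · intro hs
    obtain ⟨z, hz⟩ := Option.isSome_iff_exists.mp hs
    exact le_compl_of_defined h hz
  · intro hle
    obtain ⟨z, hz⟩ := defined_of_le h hle
    rw [hz]; rfl

lemma add_le_add {a b x u v : E} (hab : eaLe add a b) (hu : add x a = some u)
    (hv : add x b = some v) : eaLe add u v := by
  obtain ⟨c, hc⟩ := hab
  have hs := h.assoc x a c
  rw [hu, hc] at hs
  simp only [Option.bind_some] at hs
  rw [hv] at hs
  exact ⟨c, hs⟩

/-- Key computation: if `y' + a = v` then `y' + v' = a'`. -/
lemma key_comp {y a v : E} (hv : add (compl y) a = some v) :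
    add (compl y) (compl v) = some (compl a) := by
  have h1 := sub h hv
  rw [cc h] at h1
  have h2 := sub h h1
  rw [h.comm] at h2
  exact h2

end EA

end EA

section Cones

variable {add : E → E → Option E} {compl : E → E} {zero one : E}

namespace EA

variable (h : IsEffectAlgebra add compl zero one)
include h

lemma cb {S T : Set E}
    (hST : setLE (eaLe add) (lcone (eaLe add) S) (ucone (eaLe add) T)) :
    setLE (eaLe add) (lcone (eaLe add) (compl '' T)) (ucone (eaLe add) (compl '' S)) := by
  intro p hp q hq
  have hp' : compl p ∈ ucone (eaLe add) T := by
    intro t ht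
    have h1 := compl_antitone h (hp (compl t) ⟨t, ht, rfl⟩)
    rwa [cc h] at h1
  have hq' : compl q ∈ lcone (eaLe add) S := by
    intro s hs
    have h1 := compl_antitone h (hq (compl s) ⟨s, hs, rfl⟩)
    rwa [cc h] at h1
  have h1 := compl_antitone h (hST (compl q) hq' (compl p) hp')
  rwa [cc h, cc h] at h1

lemma cii (S : Set E) : compl '' (compl '' S) = S := by
  ext t
  constructor
  · rintro ⟨u, ⟨v, hv, rfl⟩, rfl⟩
    rwa [cc h]
  · intro ht
    exact ⟨compl t, ⟨t, ht, rfl⟩, cc h t⟩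

lemma key_set {y : E} (S : Set E) (hS : ∀ a ∈ S, eaLe add a y) :
    addLSet add (compl y) (compl '' (addLSet add (compl y) S)) = compl '' S := by
  ext w
  constructor
  · rintro ⟨t, ⟨v, ⟨a, haS, hav⟩, rfl⟩, hw⟩
    rw [key_comp h hav] at hw
    exact ⟨a, haS, Option.some_injective _ hw⟩
  · rintro ⟨a, haS, rfl⟩
    obtain ⟨v, hv⟩ := defined_of_le h (compl_antitone h (hS a haS))
    exact ⟨compl v, ⟨v, ⟨a, haS, hv⟩, rfl⟩, key_comp h hv⟩

lemma main_step (hMon : Monotonous add compl) {y : E} (S T : Set E)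
    (hSne : S.Nonempty) (hTne : T.Nonempty)
    (hS : ∀ a ∈ S, eaLe add a y) (hT : ∀ a ∈ T, eaLe add a y)
    (hyp : setLE (eaLe add) (lcone (eaLe add) (compl '' (addLSet add (compl y) S)))
      (ucone (eaLe add) T)) :
    setLE (eaLe add) (lcone (eaLe add) (compl '' S))
      (ucone (eaLe add) (addLSet add (compl y) T)) := by
  have hA1ne : (compl '' (addLSet add (compl y) S)).Nonempty := by
    obtain ⟨a, ha⟩ := hSne
    obtain ⟨v, hv⟩ := defined_of_le h (compl_antitone h (hS a ha))
    exact ⟨compl v, ⟨v, ⟨a, ha, hv⟩, rfl⟩⟩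
  have hbound : ∀ a ∈ compl '' (addLSet add (compl y) S) ∪ T,
      eaLe add a (compl (compl y)) := by
    simp only [cc h]
    rintro a (⟨v, ⟨b, hb, hv⟩, rfl⟩ | haT)
    · have h1 := compl_antitone h (⟨b, hv⟩ : eaLe add (compl y) v)
      rwa [cc h] at h1
    · exact hT a haT
  have hres := hMon (compl y) _ T hA1ne hTne hbound hyp
  rwa [key_set h S hS] at hres

lemma adjoint_lemma (hMon : Monotonous add compl) (x y z : E) :
    setLE (eaLe add)
      (lcone (eaLe add) (odotLSet (eaOdot add compl) (ucone (eaLe add) {x, compl y}) y))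
      (ucone (eaLe add) (lcone (eaLe add) {y, z})) ↔
    setLE (eaLe add) (lcone (eaLe add) (ucone (eaLe add) {x, compl y}))
      (ucone (eaLe add) (eaImp add compl y z)) := by
  set A := lcone (eaLe add) {compl x, y} with hA
  set B := lcone (eaLe add) {y, z} with hB
  have hUA : ucone (eaLe add) {x, compl y} = compl '' A := by
    ext s
    constructor
    · intro hs
      refine ⟨compl s, ?_, cc h s⟩
      intro u hu
      rcases Set.mem_insert_iff.mp hu with hu | hu
      · rw [hu]
        exact compl_antitone h (hs x (Set.mem_insert _ _))
      · rw [Set.mem_singleton_iff] at hu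
        rw [hu]
        have h1 := compl_antitone h (hs (compl y) (by simp))
        rwa [cc h] at h1
    · rintro ⟨t, ht, rfl⟩
      intro u hu
      rcases Set.mem_insert_iff.mp hu with hu | hu
      · rw [hu]
        have h1 := compl_antitone h (ht (compl x) (Set.mem_insert _ _))
        rwa [cc h] at h1
      · rw [Set.mem_singleton_iff] at hu
        rw [hu]
        exact compl_antitone h (ht y (by simp))
  have hO : odotLSet (eaOdot add compl) (ucone (eaLe add) {x, compl y}) y
      = compl '' (addLSet add (compl y) A) := by
    rw [hUA]
    ext w
    constructor
    · rintro ⟨s, ⟨t, htA, rfl⟩, hw⟩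
      simp only [eaOdot] at hw
      rw [cc h, h.comm] at hw
      obtain ⟨v, hv, hvw⟩ := Option.map_eq_some_iff.mp hw
      exact ⟨v, ⟨t, htA, hv⟩, hvw⟩
    · rintro ⟨v, ⟨t, htA, hv⟩, rfl⟩
      refine ⟨compl t, ⟨t, htA, rfl⟩, ?_⟩
      simp only [eaOdot]
      rw [cc h, h.comm, hv]
      rfl
  have hAy : ∀ a ∈ A, eaLe add a y := fun a ha => ha y (by simp)
  have hBy : ∀ a ∈ B, eaLe add a y := fun a ha => ha y (by simp)
  have hAne : A.Nonempty := ⟨zero, fun u _ => zero_le h u⟩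
  have hBne : B.Nonempty := ⟨zero, fun u _ => zero_le h u⟩
  have hImp : eaImp add compl y z = addLSet add (compl y) B := rfl
  constructor
  · intro hL
    rw [hO] at hL
    have hres := main_step h hMon A B hAne hBne hAy hBy hL
    rw [hUA, hImp]
    exact hres
  · intro hR
    rw [hUA, hImp] at hR
    have h1 := cb h hR
    rw [cii h] at h1
    have h2 := main_step h hMon B A hBne hAne hBy hAy h1
    have h3 := cb h h2
    rw [cii h] at h3
    rw [hO]
    exact h3

lemma div_lemma (x y : E) (hxy : eaLe add x y) :
    odotRSet (eaOdot add compl) y (eaImp add compl y x) = lcone (eaLe add) {x} := by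
  ext w
  constructor
  · rintro ⟨s, ⟨c, hc, hcs⟩, hw⟩
    simp only [eaOdot] at hw
    rw [key_comp h hcs] at hw
    simp only [Option.map_some] at hw
    rw [cc h] at hw
    have hwc : w = c := (Option.some_injective _ hw).symm
    subst hwc
    intro u hu
    rw [Set.mem_singleton_iff] at hu
    rw [hu]
    exact hc x (by simp)
  · intro hw
    have hwx : eaLe add w x := hw x rfl
    have hwy : eaLe add w y := le_trans h hwx hxy
    obtain ⟨s, hs⟩ := defined_of_le h (compl_antitone h hwy)
    refine ⟨s, ⟨w, ?_, hs⟩, ?_⟩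
    · intro u hu
      rcases Set.mem_insert_iff.mp hu with hu | hu
      · rw [hu]
        exact hwy
      · rw [Set.mem_singleton_iff] at hu
        rw [hu]
        exact hwx
    · simp only [eaOdot]
      rw [key_comp h hs, Option.map_some, cc h]

end EA

end Cones

/-- Theorem 1 of the paper: a monotonous effect algebra becomes a divisible
commutative unsharp residuated poset via `x ⊙ y := (x' + y')'` and
`x → y := x' + L(x,y)`. -/
theorem stmt0 (add : E → E → Option E) (compl : E → E) (zero one : E)
    (hEA : IsEffectAlgebra add compl zero one)
    (hMon : Monotonous add compl) :
    IsCURP (eaLe add) (eaOdot add compl) (eaImp add compl) compl zero one ∧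
    CURPDivisible (eaLe add) (eaOdot add compl) (eaImp add compl) := by
  refine ⟨⟨EA.le_refl hEA, fun x y h1 h2 => EA.le_antisymm hEA h1 h2,
    fun x y z h1 h2 => EA.le_trans hEA h1 h2, EA.zero_le hEA, EA.le_one hEA,
    EA.cc hEA, fun x y h1 => EA.compl_antitone hEA h1,
    ?_, ?_, ?_, ?_, ?_, ?_,
    fun x y z => EA.adjoint_lemma hEA hMon x y z, ?_⟩,
    fun x y hxy => EA.div_lemma hEA x y hxy⟩
  · -- odot_defined
    intro x y
    have hs : ((add (compl x) (compl y)).map compl).isSome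
        = (add (compl x) (compl y)).isSome := by
      cases add (compl x) (compl y) <;> rfl
    simp only [eaOdot]
    rw [hs, EA.isSome_iff hEA, EA.cc hEA]
  · -- odot_comm
    intro x y
    simp only [eaOdot]
    rw [hEA.comm]
  · -- odot_assoc
    intro x y z
    have ha := hEA.assoc (compl x) (compl y) (compl z)
    simp only [eaOdot]
    cases h1 : add (compl x) (compl y) with
    | none =>
      rw [h1] at ha
      simp only [Option.bind_none] at ha
      cases h2 : add (compl y) (compl z) with
      | none => simp
      | some v =>
        rw [h2] at ha
        simp only [Option.bind_some] at ha
        simp only [Option.map_none, Option.bind_none, Option.map_some, Option.bind_some,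
          EA.cc hEA]
        rw [← ha]
        rfl
    | some u =>
      rw [h1] at ha
      simp only [Option.bind_some] at ha
      cases h2 : add (compl y) (compl z) with
      | none =>
        rw [h2] at ha
        simp only [Option.bind_none] at ha
        simp only [Option.map_none, Option.bind_none, Option.map_some, Option.bind_some,
          EA.cc hEA]
        rw [ha]
        rfl
      | some v =>
        rw [h2] at ha
        simp only [Option.bind_some] at ha
        simp only [Option.map_some, Option.bind_some, EA.cc hEA]
        rw [ha]
  · -- odot_one
    intro x
    simp only [eaOdot]
    rw [EA.compl_one hEA, EA.add_zero hEA]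
    simp only [Option.map_some]
    rw [EA.cc hEA]
  · -- one_odot
    intro x
    simp only [eaOdot]
    rw [EA.compl_one hEA, EA.zero_add hEA]
    simp only [Option.map_some]
    rw [EA.cc hEA]
  · -- odot_mono
    intro x y z a b hzx hxy hxa hyb
    simp only [eaOdot] at hxa hyb
    obtain ⟨p, hp, hpa⟩ := Option.map_eq_some_iff.mp hxa
    obtain ⟨q, hq, hqb⟩ := Option.map_eq_some_iff.mp hyb
    rw [hEA.comm] at hp hq
    have hle : eaLe add (compl y) (compl x) := EA.compl_antitone hEA hxy
    have hqp := EA.add_le_add hEA hle hq hp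
    subst hpa
    subst hqb
    exact EA.compl_antitone hEA hqp
  · -- imp_zero
    intro x
    ext w
    constructor
    · rintro ⟨c, hc, hw⟩
      have hc0 : eaLe add c zero := hc zero (by simp)
      have hcz : c = zero := EA.le_antisymm hEA hc0 (EA.zero_le hEA c)
      subst hcz
      rw [EA.add_zero hEA] at hw
      exact (Option.some_injective _ hw).symm
    · intro hw
      rw [Set.mem_singleton_iff] at hw
      subst hw
      exact ⟨zero, fun u _ => EA.zero_le hEA u, EA.add_zero hEA (compl x)⟩

end Paper
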